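/- Let f : ℤ⁺ → ℂ be an arbitrary arithmetic function. As an identity of formal power series in q, (∏_{j≥1}(1−q^j)) · Σ_{n≥1} f(n) q^n/(1−q^n) = Σ_{n≥1} (Σ_{i=1}^{n} a_{n,i} f(i)) q^n; that is, the n-th coefficient of (q;q)_∞ · L_f(q) equals a_f(n) for every n ≥ 1. -/

import Mathlib

/-!
STATEMENT 5: As formal power series in `q`,
`(∏_{j ≥ 1} (1-q^j)) · ∑_{n ≥ 1} f(n) q^n/(1-q^n) = ∑_{n ≥ 1} (∑_{i=1}^n a_{n,i} f(i)) q^n`,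
i.e. the `n`-th coefficient of `(q;q)_∞ · L_f(q)` equals `a_f(n)` for every `n ≥ 1`.

The infinite product `(q;q)_∞` is defined coefficientwise: the coefficient of `q^t`
stabilizes in the partial products `∏_{j=1}^N (1-q^j)` as soon as `N ≥ t`.  Likewise the
Lambert series `L_f(q) = ∑_{n ≥ 1} f(n) q^n/(1-q^n)` is defined coefficientwise through its
partial sums, where `q^n/(1-q^n)` denotes the geometric series `∑_{s ≥ 1} q^{s n}`.
-/

open PowerSeries

/-- `c(m) = (-1)^k` when `m = k(3k+1)/2` or `m = k(3k-1)/2` for some integer `k ≥ 0`,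
and `c(m) = 0` otherwise. -/
def pentCoeff (m : ℤ) : ℤ :=
  ∑ k ∈ Finset.range (m.toNat + 1),
    ((if 2 * m = (k : ℤ) * (3 * k + 1) then (-1 : ℤ) ^ k else 0) +
      (if 2 * m = (k : ℤ) * (3 * k - 1) ∧ 1 ≤ k then (-1 : ℤ) ^ k else 0))

/-- `a_{n,i} := ∑_{s=0}^{⌊n/i⌋ - 1} c(n - (s+1) i)`. -/
def aEnt (n i : ℕ) : ℤ :=
  ∑ s ∈ Finset.range (n / i), pentCoeff ((n : ℤ) - (s + 1) * i)

/-- The formal power series `q^n/(1-q^n) = ∑_{s ≥ 1} q^{s n}` (for `n ≥ 1`). -/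
noncomputable def lambertTerm (n : ℕ) : PowerSeries ℂ :=
  PowerSeries.mk fun t => if n ∣ t ∧ t ≠ 0 then 1 else 0

/-- The Lambert series `L_f(q) = ∑_{n ≥ 1} f(n) q^n/(1-q^n)`, defined coefficientwise
via its partial sums (the coefficient of `q^t` only involves terms with `n ≤ t`). -/
noncomputable def Lf (f : ℕ → ℂ) : PowerSeries ℂ :=
  PowerSeries.mk fun t =>
    PowerSeries.coeff (R := ℂ) t (∑ n ∈ Finset.Icc 1 t, f n • lambertTerm n)

/-- The infinite product `(q;q)_∞ = ∏_{j ≥ 1} (1-q^j)`, defined coefficientwise via its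
partial products (the coefficient of `q^t` stabilizes for `N ≥ t`). -/
noncomputable def pochInf : PowerSeries ℂ :=
  PowerSeries.mk fun t =>
    PowerSeries.coeff (R := ℂ) t (∏ j ∈ Finset.Icc 1 t, (1 - (PowerSeries.X : PowerSeries ℂ) ^ j))

namespace Frank

def mS (S : Finset ℕ) : ℕ := if h : S.Nonempty then S.max' h else 0
def sS (S : Finset ℕ) : ℕ := if h : S.Nonempty then S.min' h else 0
def rS (S : Finset ℕ) : ℕ :=
  Nat.findGreatest (fun k => Finset.Icc (mS S + 1 - k) (mS S) ⊆ S) (mS S)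

def caseA (S : Finset ℕ) : Prop := sS S ≤ rS S ∧ 2 * sS S ≤ mS S
instance : DecidablePred caseA := fun _ => instDecidableAnd

def Amap (S : Finset ℕ) : Finset ℕ :=
  ((S \ Finset.Icc (mS S + 1 - sS S) (mS S)).erase (sS S)) ∪
    Finset.Icc (mS S + 2 - sS S) (mS S + 1)

def Bmap (S : Finset ℕ) : Finset ℕ :=
  insert (rS S) ((S \ Finset.Icc (mS S + 1 - rS S) (mS S)) ∪
    Finset.Icc (mS S - rS S) (mS S - 1))

def gmap (S : Finset ℕ) : Finset ℕ := if caseA S then Amap S else Bmap S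

def Ex (S : Finset ℕ) : Prop :=
  S = Finset.Icc (sS S) (mS S) ∧ (mS S + 1 = 2 * sS S ∨ mS S + 2 = 2 * sS S)
instance : DecidablePred Ex := fun _ => instDecidableAnd

def D (t : ℕ) : Finset (Finset ℕ) :=
  (Finset.Icc 1 t).powerset.filter (fun S => ∑ x ∈ S, x = t)

section Basic
variable {S : Finset ℕ}

lemma mS_mem (hne : S.Nonempty) : mS S ∈ S := by rw [mS, dif_pos hne]; exact S.max'_mem hne
lemma sS_mem (hne : S.Nonempty) : sS S ∈ S := by rw [sS, dif_pos hne]; exact S.min'_mem hne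
lemma le_mS (hne : S.Nonempty) {x : ℕ} (hx : x ∈ S) : x ≤ mS S := by
  rw [mS, dif_pos hne]; exact S.le_max' x hx
lemma sS_le (hne : S.Nonempty) {x : ℕ} (hx : x ∈ S) : sS S ≤ x := by
  rw [sS, dif_pos hne]; exact S.min'_le x hx
lemma mS_eq (hne : S.Nonempty) {a : ℕ} (ha : a ∈ S) (h : ∀ x ∈ S, x ≤ a) : mS S = a :=
  le_antisymm (h _ (mS_mem hne)) (le_mS hne ha)
lemma sS_eq (hne : S.Nonempty) {a : ℕ} (ha : a ∈ S) (h : ∀ x ∈ S, a ≤ x) : sS S = a :=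
  le_antisymm (sS_le hne ha) (h _ (sS_mem hne))
lemma sS_le_mS (hne : S.Nonempty) : sS S ≤ mS S := sS_le hne (mS_mem hne)

lemma sS_pos (hne : S.Nonempty) (hpos : ∀ x ∈ S, 1 ≤ x) : 1 ≤ sS S := hpos _ (sS_mem hne)
lemma mS_pos (hne : S.Nonempty) (hpos : ∀ x ∈ S, 1 ≤ x) : 1 ≤ mS S := hpos _ (mS_mem hne)

lemma rS_pos (hne : S.Nonempty) (hpos : ∀ x ∈ S, 1 ≤ x) : 1 ≤ rS S := by
  apply Nat.le_findGreatest (mS_pos hne hpos)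
  intro x hx
  simp only [Finset.mem_Icc] at hx
  have : x = mS S := by omega
  exact this ▸ mS_mem hne

lemma rS_le : rS S ≤ mS S := Nat.findGreatest_le _

lemma run_subset (hne : S.Nonempty) (hpos : ∀ x ∈ S, 1 ≤ x) : Finset.Icc (mS S + 1 - rS S) (mS S) ⊆ S := by
  have h1 : rS S ≠ 0 := by have := rS_pos hne hpos; omega
  exact Nat.findGreatest_of_ne_zero rfl h1

lemma notmem_run_succ (hne : S.Nonempty) (hpos : ∀ x ∈ S, 1 ≤ x) : mS S - rS S ∉ S := by
  intro hmem
  have hr1 := rS_pos hne hpos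
  have hrm := rS_le (S := S)
  have hkey : Finset.Icc (mS S + 1 - (rS S + 1)) (mS S) ⊆ S := by
    intro x hx
    simp only [Finset.mem_Icc] at hx
    rcases eq_or_ne x (mS S - rS S) with rfl | hne'
    · exact hmem
    · apply run_subset hne hpos
      simp only [Finset.mem_Icc]; omega
  rcases eq_or_lt_of_le hrm with heq | hlt
  · have : mS S - rS S = 0 := by omega
    rw [this] at hmem
    exact absurd (hpos 0 hmem) (by omega)
  · exact Nat.findGreatest_is_greatest (P := fun k => Finset.Icc (mS S + 1 - k) (mS S) ⊆ S)
      (k := rS S + 1) (n := mS S) (by unfold rS; omega) (by omega) hkey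

lemma rS_eq (hne : S.Nonempty) (hpos : ∀ x ∈ S, 1 ≤ x) {k : ℕ} (hk1 : 1 ≤ k) (hkm : k ≤ mS S)
    (hsub : Finset.Icc (mS S + 1 - k) (mS S) ⊆ S) (hnot : mS S - k ∉ S) : rS S = k := by
  refine le_antisymm ?_ (Nat.le_findGreatest hkm hsub)
  by_contra hlt
  push_neg at hlt
  apply hnot
  apply run_subset hne hpos
  simp only [Finset.mem_Icc]
  omega

end Basic

section CaseA
variable {S : Finset ℕ}

lemma A_prelim (hne : S.Nonempty) (hpos : ∀ x ∈ S, 1 ≤ x) (hA : caseA S) :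
    1 ≤ sS S ∧ 2 * sS S ≤ mS S ∧ sS S < mS S ∧
      Finset.Icc (mS S + 1 - sS S) (mS S) ⊆ S := by
  obtain ⟨hA1, hA2⟩ := hA
  have hs1 : 1 ≤ sS S := sS_pos hne hpos
  refine ⟨hs1, hA2, by omega, ?_⟩
  intro x hx
  apply run_subset hne hpos
  simp only [Finset.mem_Icc] at hx ⊢
  omega

lemma A_disj (hne : S.Nonempty) (hpos : ∀ x ∈ S, 1 ≤ x) (hA : caseA S) :
    Disjoint ((S \ Finset.Icc (mS S + 1 - sS S) (mS S)).erase (sS S))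
      (Finset.Icc (mS S + 2 - sS S) (mS S + 1)) := by
  obtain ⟨hs1, hA2, hsm, hrun⟩ := A_prelim hne hpos hA
  rw [Finset.disjoint_left]
  intro x hx hx2
  simp only [Finset.mem_erase, Finset.mem_sdiff, Finset.mem_Icc] at hx hx2
  have := le_mS hne hx.2.1
  omega

lemma A_shift (hne : S.Nonempty) (hpos : ∀ x ∈ S, 1 ≤ x) (hA : caseA S) :
    Finset.Icc (mS S + 2 - sS S) (mS S + 1) =
      (Finset.Icc (mS S + 1 - sS S) (mS S)).image (· + 1) := by
  obtain ⟨hs1, hA2, hsm, hrun⟩ := A_prelim hne hpos hA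
  rw [Finset.image_add_right_Icc]
  congr 1
  omega

lemma A_shift_sum (hne : S.Nonempty) (hpos : ∀ x ∈ S, 1 ≤ x) (hA : caseA S) :
    ∑ x ∈ Finset.Icc (mS S + 2 - sS S) (mS S + 1), x =
      (∑ x ∈ Finset.Icc (mS S + 1 - sS S) (mS S), x) + sS S := by
  obtain ⟨hs1, hA2, hsm, hrun⟩ := A_prelim hne hpos hA
  rw [A_shift hne hpos hA, Finset.sum_image (by intro a _ b _ h; simp only at h; omega)]
  rw [Finset.sum_add_distrib, Finset.sum_const, Nat.card_Icc, smul_eq_mul, mul_one]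
  congr 1
  omega

lemma A_shift_card (hne : S.Nonempty) (hpos : ∀ x ∈ S, 1 ≤ x) (hA : caseA S) :
    (Finset.Icc (mS S + 2 - sS S) (mS S + 1)).card = sS S := by
  obtain ⟨hs1, hA2, hsm, hrun⟩ := A_prelim hne hpos hA
  rw [Nat.card_Icc]
  omega

lemma A_run_card (hne : S.Nonempty) (hpos : ∀ x ∈ S, 1 ≤ x) (hA : caseA S) :
    (Finset.Icc (mS S + 1 - sS S) (mS S)).card = sS S := by
  obtain ⟨hs1, hA2, hsm, hrun⟩ := A_prelim hne hpos hA
  rw [Nat.card_Icc]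
  omega

lemma A_s_notmem_run (hne : S.Nonempty) (hpos : ∀ x ∈ S, 1 ≤ x) (hA : caseA S) :
    sS S ∉ Finset.Icc (mS S + 1 - sS S) (mS S) := by
  obtain ⟨hs1, hA2, hsm, hrun⟩ := A_prelim hne hpos hA
  simp only [Finset.mem_Icc]
  omega

lemma A_Sdecomp (hne : S.Nonempty) (hpos : ∀ x ∈ S, 1 ≤ x) (hA : caseA S) :
    ((S \ Finset.Icc (mS S + 1 - sS S) (mS S)).erase (sS S)) ∪
      insert (sS S) (Finset.Icc (mS S + 1 - sS S) (mS S)) = S := by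
  obtain ⟨hs1, hA2, hsm, hrun⟩ := A_prelim hne hpos hA
  apply Finset.Subset.antisymm
  · intro x hx
    rcases Finset.mem_union.1 hx with h | h
    · exact (Finset.mem_sdiff.1 (Finset.mem_of_mem_erase h)).1
    · rcases Finset.mem_insert.1 h with rfl | h
      · exact sS_mem hne
      · exact hrun h
  · intro x hx
    by_cases hxs : x = sS S
    · subst hxs; exact Finset.mem_union_right _ (Finset.mem_insert_self _ _)
    · by_cases hxI : x ∈ Finset.Icc (mS S + 1 - sS S) (mS S)
      · exact Finset.mem_union_right _ (Finset.mem_insert_of_mem hxI)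
      · exact Finset.mem_union_left _
          (Finset.mem_erase.2 ⟨hxs, Finset.mem_sdiff.2 ⟨hx, hxI⟩⟩)

lemma A_Sdecomp_disj (hne : S.Nonempty) (hpos : ∀ x ∈ S, 1 ≤ x) (hA : caseA S) :
    Disjoint ((S \ Finset.Icc (mS S + 1 - sS S) (mS S)).erase (sS S))
      (insert (sS S) (Finset.Icc (mS S + 1 - sS S) (mS S))) := by
  rw [Finset.disjoint_left]
  intro x hx hx2
  simp only [Finset.mem_erase, Finset.mem_sdiff] at hx
  rcases Finset.mem_insert.1 hx2 with rfl | h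
  · exact hx.1 rfl
  · exact hx.2.2 h

lemma A_sum (hne : S.Nonempty) (hpos : ∀ x ∈ S, 1 ≤ x) (hA : caseA S) :
    ∑ x ∈ Amap S, x = ∑ x ∈ S, x := by
  obtain ⟨hs1, hA2, hsm, hrun⟩ := A_prelim hne hpos hA
  rw [Amap, Finset.sum_union (A_disj hne hpos hA), A_shift_sum hne hpos hA]
  conv_rhs => rw [← A_Sdecomp hne hpos hA]
  rw [Finset.sum_union (A_Sdecomp_disj hne hpos hA),
    Finset.sum_insert (A_s_notmem_run hne hpos hA)]
  omega

lemma A_card (hne : S.Nonempty) (hpos : ∀ x ∈ S, 1 ≤ x) (hA : caseA S) :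
    (Amap S).card + 1 = S.card := by
  obtain ⟨hs1, hA2, hsm, hrun⟩ := A_prelim hne hpos hA
  rw [Amap, Finset.card_union_of_disjoint (A_disj hne hpos hA), A_shift_card hne hpos hA]
  conv_rhs => rw [← A_Sdecomp hne hpos hA]
  rw [Finset.card_union_of_disjoint (A_Sdecomp_disj hne hpos hA),
    Finset.card_insert_of_notMem (A_s_notmem_run hne hpos hA), A_run_card hne hpos hA]
  omega

lemma A_mem_iff (hne : S.Nonempty) (hpos : ∀ x ∈ S, 1 ≤ x) (hA : caseA S) {x : ℕ} :
    x ∈ Amap S ↔ ((x ∈ S ∧ x ≠ sS S ∧ x < mS S + 1 - sS S) ∨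
      (mS S + 2 - sS S ≤ x ∧ x ≤ mS S + 1)) := by
  obtain ⟨hs1, hA2, hsm, hrun⟩ := A_prelim hne hpos hA
  rw [Amap]
  simp only [Finset.mem_union, Finset.mem_erase, Finset.mem_sdiff, Finset.mem_Icc]
  constructor
  · rintro (⟨h1, h2, h3⟩ | h)
    · exact Or.inl ⟨h2, h1, by have := le_mS hne h2; omega⟩
    · exact Or.inr h
  · rintro (⟨h1, h2, h3⟩ | h)
    · exact Or.inl ⟨h2, h1, by omega⟩
    · exact Or.inr h

lemma A_pos (hne : S.Nonempty) (hpos : ∀ x ∈ S, 1 ≤ x) (hA : caseA S) :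
    ∀ x ∈ Amap S, 1 ≤ x := by
  obtain ⟨hs1, hA2, hsm, hrun⟩ := A_prelim hne hpos hA
  intro x hx
  rcases (A_mem_iff hne hpos hA).1 hx with h | h
  · exact hpos x h.1
  · omega

lemma A_le (hne : S.Nonempty) (hpos : ∀ x ∈ S, 1 ≤ x) (hA : caseA S) :
    ∀ x ∈ Amap S, x ≤ mS S + 1 := by
  obtain ⟨hs1, hA2, hsm, hrun⟩ := A_prelim hne hpos hA
  intro x hx
  rcases (A_mem_iff hne hpos hA).1 hx with h | h
  · have := le_mS hne h.1; omega
  · omega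

lemma A_top_mem (hne : S.Nonempty) (hpos : ∀ x ∈ S, 1 ≤ x) (hA : caseA S) :
    mS S + 1 ∈ Amap S := by
  obtain ⟨hs1, hA2, hsm, hrun⟩ := A_prelim hne hpos hA
  rw [A_mem_iff hne hpos hA]
  omega

lemma A_ne (hne : S.Nonempty) (hpos : ∀ x ∈ S, 1 ≤ x) (hA : caseA S) :
    (Amap S).Nonempty := ⟨_, A_top_mem hne hpos hA⟩

lemma A_max (hne : S.Nonempty) (hpos : ∀ x ∈ S, 1 ≤ x) (hA : caseA S) :
    mS (Amap S) = mS S + 1 :=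
  mS_eq (A_ne hne hpos hA) (A_top_mem hne hpos hA) (A_le hne hpos hA)

lemma A_min_gt (hne : S.Nonempty) (hpos : ∀ x ∈ S, 1 ≤ x) (hA : caseA S) :
    sS S < sS (Amap S) := by
  obtain ⟨hs1, hA2, hsm, hrun⟩ := A_prelim hne hpos hA
  have hmem := sS_mem (A_ne hne hpos hA)
  rcases (A_mem_iff hne hpos hA).1 hmem with h | h
  · have := sS_le hne h.1
    omega
  · omega

lemma A_notmem_key (hne : S.Nonempty) (hpos : ∀ x ∈ S, 1 ≤ x) (hA : caseA S) :
    mS S + 1 - sS S ∉ Amap S := by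
  obtain ⟨hs1, hA2, hsm, hrun⟩ := A_prelim hne hpos hA
  rw [A_mem_iff hne hpos hA]
  omega

lemma A_rS (hne : S.Nonempty) (hpos : ∀ x ∈ S, 1 ≤ x) (hA : caseA S) :
    rS (Amap S) = sS S := by
  obtain ⟨hs1, hA2, hsm, hrun⟩ := A_prelim hne hpos hA
  apply rS_eq (A_ne hne hpos hA) (A_pos hne hpos hA) hs1
  · rw [A_max hne hpos hA]; omega
  · rw [A_max hne hpos hA]
    intro x hx
    rw [A_mem_iff hne hpos hA]
    simp only [Finset.mem_Icc] at hx
    omega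
  · rw [A_max hne hpos hA]
    exact A_notmem_key hne hpos hA

lemma A_not_caseA (hne : S.Nonempty) (hpos : ∀ x ∈ S, 1 ≤ x) (hA : caseA S) :
    ¬ caseA (Amap S) := by
  intro ⟨h1, _⟩
  rw [A_rS hne hpos hA] at h1
  have := A_min_gt hne hpos hA
  omega

lemma A_Bmap (hne : S.Nonempty) (hpos : ∀ x ∈ S, 1 ≤ x) (hA : caseA S) :
    Bmap (Amap S) = S := by
  obtain ⟨hs1, hA2, hsm, hrun⟩ := A_prelim hne hpos hA
  rw [Bmap, A_max hne hpos hA, A_rS hne hpos hA]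
  have e1 : mS S + 1 + 1 - sS S = mS S + 2 - sS S := by omega
  have e2 : mS S + 1 - 1 = mS S := by omega
  have e3 : mS S + 1 - sS S = mS S + 1 - sS S := rfl
  rw [e1, e2]
  have e4 : Amap S \ Finset.Icc (mS S + 2 - sS S) (mS S + 1) =
      (S \ Finset.Icc (mS S + 1 - sS S) (mS S)).erase (sS S) := by
    rw [Amap, Finset.union_sdiff_right]
    apply Finset.sdiff_eq_self_of_disjoint
    exact A_disj hne hpos hA
  rw [e4, ← Finset.union_insert, A_Sdecomp hne hpos hA]

lemma A_notEx (hne : S.Nonempty) (hpos : ∀ x ∈ S, 1 ≤ x) (hA : caseA S) :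
    ¬ Ex (Amap S) := by
  obtain ⟨hs1, hA2, hsm, hrun⟩ := A_prelim hne hpos hA
  intro ⟨hI, hcond⟩
  rw [A_max hne hpos hA] at hcond
  have hk1 : mS S + 2 - sS S ∈ Amap S := by
    rw [A_mem_iff hne hpos hA]; omega
  have hk2 : mS S + 1 - sS S ∉ Amap S := A_notmem_key hne hpos hA
  have hub : sS (Amap S) ≤ mS S + 2 - sS S := sS_le (A_ne hne hpos hA) hk1
  have hlb : mS S + 1 - sS S < sS (Amap S) := by
    by_contra hcon
    push_neg at hcon
    apply hk2
    rw [hI, Finset.mem_Icc, A_max hne hpos hA]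
    omega
  omega
end CaseA

section CaseB
variable {S : Finset ℕ}

lemma B_prelim (hne : S.Nonempty) (hpos : ∀ x ∈ S, 1 ≤ x)
    (hB1 : rS S < sS S) (hB2 : 2 * rS S + 1 ≤ mS S) :
    1 ≤ rS S ∧ rS S ≤ mS S ∧ 1 ≤ sS S ∧
      Finset.Icc (mS S + 1 - rS S) (mS S) ⊆ S ∧ mS S - rS S ∉ S := by
  exact ⟨rS_pos hne hpos, rS_le, sS_pos hne hpos, run_subset hne hpos,
    notmem_run_succ hne hpos⟩

lemma B_sdiff_le (hne : S.Nonempty) (hpos : ∀ x ∈ S, 1 ≤ x)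
    (hB1 : rS S < sS S) (hB2 : 2 * rS S + 1 ≤ mS S) :
    ∀ x ∈ S \ Finset.Icc (mS S + 1 - rS S) (mS S), sS S ≤ x ∧ x + 1 ≤ mS S - rS S := by
  obtain ⟨hr1, hrm, hs1, hrun, hnot⟩ := B_prelim hne hpos hB1 hB2
  intro x hx
  rw [Finset.mem_sdiff, Finset.mem_Icc] at hx
  have h1 := le_mS hne hx.1
  have h2 := sS_le hne hx.1
  have h3 : x ≠ mS S - rS S := fun h => hnot (h ▸ hx.1)
  omega

lemma B_shift (hne : S.Nonempty) (hpos : ∀ x ∈ S, 1 ≤ x)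
    (hB1 : rS S < sS S) (hB2 : 2 * rS S + 1 ≤ mS S) :
    Finset.Icc (mS S + 1 - rS S) (mS S) =
      (Finset.Icc (mS S - rS S) (mS S - 1)).image (· + 1) := by
  obtain ⟨hr1, hrm, hs1, hrun, hnot⟩ := B_prelim hne hpos hB1 hB2
  rw [Finset.image_add_right_Icc]
  congr 1 <;> omega

lemma B_shift_sum (hne : S.Nonempty) (hpos : ∀ x ∈ S, 1 ≤ x)
    (hB1 : rS S < sS S) (hB2 : 2 * rS S + 1 ≤ mS S) :
    ∑ x ∈ Finset.Icc (mS S + 1 - rS S) (mS S), x =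
      (∑ x ∈ Finset.Icc (mS S - rS S) (mS S - 1), x) + rS S := by
  obtain ⟨hr1, hrm, hs1, hrun, hnot⟩ := B_prelim hne hpos hB1 hB2
  rw [B_shift hne hpos hB1 hB2, Finset.sum_image (by intro a _ b _ h; simp only at h; omega)]
  rw [Finset.sum_add_distrib, Finset.sum_const, Nat.card_Icc, smul_eq_mul, mul_one]
  congr 1
  omega

lemma B_shift_card (hne : S.Nonempty) (hpos : ∀ x ∈ S, 1 ≤ x)
    (hB1 : rS S < sS S) (hB2 : 2 * rS S + 1 ≤ mS S) :
    (Finset.Icc (mS S - rS S) (mS S - 1)).card = rS S := by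
  obtain ⟨hr1, hrm, hs1, hrun, hnot⟩ := B_prelim hne hpos hB1 hB2
  rw [Nat.card_Icc]; omega

lemma B_disj (hne : S.Nonempty) (hpos : ∀ x ∈ S, 1 ≤ x)
    (hB1 : rS S < sS S) (hB2 : 2 * rS S + 1 ≤ mS S) :
    Disjoint (S \ Finset.Icc (mS S + 1 - rS S) (mS S))
      (Finset.Icc (mS S - rS S) (mS S - 1)) := by
  rw [Finset.disjoint_left]
  intro x hx hx2
  have h := B_sdiff_le hne hpos hB1 hB2 x hx
  rw [Finset.mem_Icc] at hx2
  omega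

lemma B_r_notmem (hne : S.Nonempty) (hpos : ∀ x ∈ S, 1 ≤ x)
    (hB1 : rS S < sS S) (hB2 : 2 * rS S + 1 ≤ mS S) :
    rS S ∉ (S \ Finset.Icc (mS S + 1 - rS S) (mS S)) ∪
      Finset.Icc (mS S - rS S) (mS S - 1) := by
  obtain ⟨hr1, hrm, hs1, hrun, hnot⟩ := B_prelim hne hpos hB1 hB2
  intro h
  rcases Finset.mem_union.1 h with h | h
  · have := B_sdiff_le hne hpos hB1 hB2 _ h; omega
  · rw [Finset.mem_Icc] at h; omega

lemma B_mem_iff (hne : S.Nonempty) (hpos : ∀ x ∈ S, 1 ≤ x)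
    (hB1 : rS S < sS S) (hB2 : 2 * rS S + 1 ≤ mS S) {x : ℕ} :
    x ∈ Bmap S ↔ (x = rS S ∨ (x ∈ S ∧ x + 1 ≤ mS S - rS S) ∨
      (mS S - rS S ≤ x ∧ x ≤ mS S - 1)) := by
  obtain ⟨hr1, hrm, hs1, hrun, hnot⟩ := B_prelim hne hpos hB1 hB2
  rw [Bmap]
  simp only [Finset.mem_insert, Finset.mem_union, Finset.mem_sdiff, Finset.mem_Icc]
  constructor
  · rintro (rfl | ⟨h1, h2⟩ | h)
    · exact Or.inl rfl
    · refine Or.inr (Or.inl ⟨h1, ?_⟩)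
      have := le_mS hne h1
      have : x ≠ mS S - rS S := fun h => hnot (h ▸ h1)
      omega
    · exact Or.inr (Or.inr h)
  · rintro (rfl | ⟨h1, h2⟩ | h)
    · exact Or.inl rfl
    · exact Or.inr (Or.inl ⟨h1, by omega⟩)
    · exact Or.inr (Or.inr h)

lemma B_decomp (hne : S.Nonempty) (hpos : ∀ x ∈ S, 1 ≤ x)
    (hB1 : rS S < sS S) (hB2 : 2 * rS S + 1 ≤ mS S) :
    (S \ Finset.Icc (mS S + 1 - rS S) (mS S)) ∪ Finset.Icc (mS S + 1 - rS S) (mS S) = S :=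
  Finset.sdiff_union_of_subset (run_subset hne hpos)

lemma B_sum (hne : S.Nonempty) (hpos : ∀ x ∈ S, 1 ≤ x)
    (hB1 : rS S < sS S) (hB2 : 2 * rS S + 1 ≤ mS S) :
    ∑ x ∈ Bmap S, x = ∑ x ∈ S, x := by
  obtain ⟨hr1, hrm, hs1, hrun, hnot⟩ := B_prelim hne hpos hB1 hB2
  rw [Bmap, Finset.sum_insert (B_r_notmem hne hpos hB1 hB2),
    Finset.sum_union (B_disj hne hpos hB1 hB2)]
  conv_rhs => rw [← B_decomp hne hpos hB1 hB2]
  rw [Finset.sum_union (Finset.sdiff_disjoint), B_shift_sum hne hpos hB1 hB2]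
  omega

lemma B_card (hne : S.Nonempty) (hpos : ∀ x ∈ S, 1 ≤ x)
    (hB1 : rS S < sS S) (hB2 : 2 * rS S + 1 ≤ mS S) :
    (Bmap S).card = S.card + 1 := by
  obtain ⟨hr1, hrm, hs1, hrun, hnot⟩ := B_prelim hne hpos hB1 hB2
  rw [Bmap, Finset.card_insert_of_notMem (B_r_notmem hne hpos hB1 hB2),
    Finset.card_union_of_disjoint (B_disj hne hpos hB1 hB2), B_shift_card hne hpos hB1 hB2]
  conv_rhs => rw [← B_decomp hne hpos hB1 hB2]
  rw [Finset.card_union_of_disjoint (Finset.sdiff_disjoint)]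
  have : (Finset.Icc (mS S + 1 - rS S) (mS S)).card = rS S := by
    rw [Nat.card_Icc]; omega
  omega

lemma B_pos (hne : S.Nonempty) (hpos : ∀ x ∈ S, 1 ≤ x)
    (hB1 : rS S < sS S) (hB2 : 2 * rS S + 1 ≤ mS S) :
    ∀ x ∈ Bmap S, 1 ≤ x := by
  obtain ⟨hr1, hrm, hs1, hrun, hnot⟩ := B_prelim hne hpos hB1 hB2
  intro x hx
  rcases (B_mem_iff hne hpos hB1 hB2).1 hx with rfl | h | h
  · omega
  · exact hpos x h.1
  · omega

lemma B_le (hne : S.Nonempty) (hpos : ∀ x ∈ S, 1 ≤ x)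
    (hB1 : rS S < sS S) (hB2 : 2 * rS S + 1 ≤ mS S) :
    ∀ x ∈ Bmap S, x ≤ mS S - 1 := by
  obtain ⟨hr1, hrm, hs1, hrun, hnot⟩ := B_prelim hne hpos hB1 hB2
  intro x hx
  rcases (B_mem_iff hne hpos hB1 hB2).1 hx with rfl | h | h
  · omega
  · omega
  · omega

lemma B_r_mem (hne : S.Nonempty) (hpos : ∀ x ∈ S, 1 ≤ x)
    (hB1 : rS S < sS S) (hB2 : 2 * rS S + 1 ≤ mS S) :
    rS S ∈ Bmap S := by
  rw [Bmap]; exact Finset.mem_insert_self _ _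

lemma B_ne (hne : S.Nonempty) (hpos : ∀ x ∈ S, 1 ≤ x)
    (hB1 : rS S < sS S) (hB2 : 2 * rS S + 1 ≤ mS S) :
    (Bmap S).Nonempty := ⟨_, B_r_mem hne hpos hB1 hB2⟩

lemma B_max (hne : S.Nonempty) (hpos : ∀ x ∈ S, 1 ≤ x)
    (hB1 : rS S < sS S) (hB2 : 2 * rS S + 1 ≤ mS S) :
    mS (Bmap S) = mS S - 1 := by
  obtain ⟨hr1, hrm, hs1, hrun, hnot⟩ := B_prelim hne hpos hB1 hB2
  apply mS_eq (B_ne hne hpos hB1 hB2)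
  · rw [B_mem_iff hne hpos hB1 hB2]; omega
  · exact B_le hne hpos hB1 hB2

lemma B_min (hne : S.Nonempty) (hpos : ∀ x ∈ S, 1 ≤ x)
    (hB1 : rS S < sS S) (hB2 : 2 * rS S + 1 ≤ mS S) :
    sS (Bmap S) = rS S := by
  obtain ⟨hr1, hrm, hs1, hrun, hnot⟩ := B_prelim hne hpos hB1 hB2
  apply sS_eq (B_ne hne hpos hB1 hB2) (B_r_mem hne hpos hB1 hB2)
  intro x hx
  rcases (B_mem_iff hne hpos hB1 hB2).1 hx with rfl | h | h
  · omega
  · have := sS_le hne h.1; omega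
  · omega

lemma B_run_ge (hne : S.Nonempty) (hpos : ∀ x ∈ S, 1 ≤ x)
    (hB1 : rS S < sS S) (hB2 : 2 * rS S + 1 ≤ mS S) :
    rS S ≤ rS (Bmap S) := by
  obtain ⟨hr1, hrm, hs1, hrun, hnot⟩ := B_prelim hne hpos hB1 hB2
  apply Nat.le_findGreatest
  · rw [B_max hne hpos hB1 hB2]; omega
  · intro x hx
    rw [B_max hne hpos hB1 hB2, Finset.mem_Icc] at hx
    rw [B_mem_iff hne hpos hB1 hB2]
    omega

lemma B_caseA (hne : S.Nonempty) (hpos : ∀ x ∈ S, 1 ≤ x)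
    (hB1 : rS S < sS S) (hB2 : 2 * rS S + 1 ≤ mS S) :
    caseA (Bmap S) := by
  constructor
  · rw [B_min hne hpos hB1 hB2]
    exact B_run_ge hne hpos hB1 hB2
  · rw [B_min hne hpos hB1 hB2, B_max hne hpos hB1 hB2]
    omega

lemma B_Amap (hne : S.Nonempty) (hpos : ∀ x ∈ S, 1 ≤ x)
    (hB1 : rS S < sS S) (hB2 : 2 * rS S + 1 ≤ mS S) :
    Amap (Bmap S) = S := by
  obtain ⟨hr1, hrm, hs1, hrun, hnot⟩ := B_prelim hne hpos hB1 hB2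
  rw [Amap, B_max hne hpos hB1 hB2, B_min hne hpos hB1 hB2]
  have e1 : mS S - 1 + 1 - rS S = mS S - rS S := by omega
  have e2 : mS S - 1 + 2 - rS S = mS S + 1 - rS S := by omega
  have e3 : mS S - 1 + 1 = mS S := by omega
  rw [e1, e2, e3]
  have e4 : Bmap S \ Finset.Icc (mS S - rS S) (mS S - 1) =
      insert (rS S) (S \ Finset.Icc (mS S + 1 - rS S) (mS S)) := by
    rw [Bmap, Finset.insert_sdiff_of_notMem, Finset.union_sdiff_right]
    · congr 1
      apply Finset.sdiff_eq_self_of_disjoint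
      exact B_disj hne hpos hB1 hB2
    · rw [Finset.mem_Icc]; omega
  rw [e4, Finset.erase_insert, B_decomp hne hpos hB1 hB2]
  intro h
  have := B_sdiff_le hne hpos hB1 hB2 _ h
  omega

lemma B_notEx (hne : S.Nonempty) (hpos : ∀ x ∈ S, 1 ≤ x)
    (hB1 : rS S < sS S) (hB2 : 2 * rS S + 1 ≤ mS S) :
    ¬ Ex (Bmap S) := by
  obtain ⟨hr1, hrm, hs1, hrun, hnot⟩ := B_prelim hne hpos hB1 hB2
  intro ⟨_, hcond⟩
  rw [B_max hne hpos hB1 hB2, B_min hne hpos hB1 hB2] at hcond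
  omega

lemma not_caseA_cases (hne : S.Nonempty) (hpos : ∀ x ∈ S, 1 ≤ x)
    (hnA : ¬ caseA S) (hnE : ¬ Ex S) : rS S < sS S ∧ 2 * rS S + 1 ≤ mS S := by
  have hr1 := rS_pos hne hpos
  have hrm := rS_le (S := S)
  have hs1 := sS_pos hne hpos
  have hsm := sS_le_mS hne
  have hrun := run_subset hne hpos
  have hnot := notmem_run_succ hne hpos
  have hB1 : rS S < sS S := by
    by_contra hcon
    push_neg at hcon
    have h2 : ¬ 2 * sS S ≤ mS S := fun h => hnA ⟨hcon, h⟩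
    push_neg at h2
    have hSI : S = Finset.Icc (sS S) (mS S) := by
      apply Finset.Subset.antisymm
      · intro x hx
        rw [Finset.mem_Icc]
        exact ⟨sS_le hne hx, le_mS hne hx⟩
      · intro x hx
        rw [Finset.mem_Icc] at hx
        apply hrun
        rw [Finset.mem_Icc]
        omega
    have hrub : sS S ≤ mS S + 1 - rS S := by
      apply sS_le hne
      apply hrun
      rw [Finset.mem_Icc]
      omega
    exact hnE ⟨hSI, Or.inl (by omega)⟩
  refine ⟨hB1, ?_⟩
  by_contra hcon
  push_neg at hcon
  have hSI : S = Finset.Icc (mS S + 1 - rS S) (mS S) := by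
    apply Finset.Subset.antisymm
    · intro x hx
      rw [Finset.mem_Icc]
      have h1 := le_mS hne hx
      have h2 := sS_le hne hx
      omega
    · exact hrun
  have hmin : sS S = mS S + 1 - rS S := by
    apply sS_eq hne
    · apply hrun; rw [Finset.mem_Icc]; omega
    · intro x hx
      conv at hx => rw [hSI]
      rw [Finset.mem_Icc] at hx
      omega
  apply hnE
  refine ⟨by rw [hmin]; exact hSI, Or.inr (by omega)⟩

end CaseB

section Pent

lemma two_mul_sum_Icc (a b : ℕ) (h : a ≤ b + 1) :
    2 * (∑ x ∈ Finset.Icc a b, x) + a * (a - 1) = (b + 1) * b := by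
  have hsub : Finset.range a ⊆ Finset.range (b + 1) := by
    apply Finset.range_subset_range.2; omega
  have hIcc : Finset.Icc a b = Finset.range (b + 1) \ Finset.range a := by
    ext x
    simp only [Finset.mem_Icc, Finset.mem_sdiff, Finset.mem_range]
    omega
  have h1 := Finset.sum_sdiff (f := id) hsub
  have h2 := Finset.sum_range_id_mul_two a
  have h3 := Finset.sum_range_id_mul_two (b + 1)
  simp only [id] at h1
  rw [hIcc]
  simp only [Nat.add_sub_cancel] at h3
  linarith [h1, h2, h3]

lemma uniq1 {a b : ℕ} (h : 3 * a * a + a = 3 * b * b + b) : a = b := by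
  zify at h
  have h2 : ((a : ℤ) - b) * (3 * ((a : ℤ) + b) + 1) = 0 := by linear_combination h
  rcases mul_eq_zero.1 h2 with h3 | h3 <;> omega

lemma uniq2 {t a b : ℕ} (h1 : 2 * t + a = 3 * a * a) (h2 : 2 * t + b = 3 * b * b) :
    a = b := by
  zify at h1 h2
  have h3 : ((a : ℤ) - b) * (3 * ((a : ℤ) + b) - 1) = 0 := by linear_combination h2 - h1
  rcases mul_eq_zero.1 h3 with h4 | h4 <;> omega

lemma excl {t a b : ℕ} (hb : 1 ≤ b) (h1 : 2 * t = 3 * a * a + a)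
    (h2 : 2 * t + b = 3 * b * b) : False := by
  zify at h1 h2
  have h3 : ((a : ℤ) + b) * (3 * ((b : ℤ) - a) - 1) = 0 := by linear_combination h1 - h2
  rcases mul_eq_zero.1 h3 with h4 | h4 <;> omega

lemma mem_D_iff {t : ℕ} {S : Finset ℕ} :
    S ∈ D t ↔ (∀ x ∈ S, 1 ≤ x ∧ x ≤ t) ∧ ∑ x ∈ S, x = t := by
  rw [D, Finset.mem_filter, Finset.mem_powerset]
  constructor
  · rintro ⟨h1, h2⟩
    refine ⟨fun x hx => ?_, h2⟩
    have := h1 hx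
    rwa [Finset.mem_Icc] at this
  · rintro ⟨h1, h2⟩
    refine ⟨fun x hx => ?_, h2⟩
    rw [Finset.mem_Icc]
    exact h1 x hx

lemma D_facts {t : ℕ} {S : Finset ℕ} (ht : 1 ≤ t) (hS : S ∈ D t) :
    S.Nonempty ∧ (∀ x ∈ S, 1 ≤ x) ∧ ∑ x ∈ S, x = t := by
  rw [mem_D_iff] at hS
  refine ⟨?_, fun x hx => (hS.1 x hx).1, hS.2⟩
  rw [Finset.nonempty_iff_ne_empty]
  rintro rfl
  simp at hS
  omega

lemma Ex_char {t : ℕ} {S : Finset ℕ} (ht : 1 ≤ t) (hD : S ∈ D t) (hEx : Ex S) :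
    (∃ k, 1 ≤ k ∧ 2 * t = 3 * k * k + k ∧ S = Finset.Icc (k + 1) (2 * k)) ∨
    (∃ k, 1 ≤ k ∧ 2 * t + k = 3 * k * k ∧ S = Finset.Icc k (2 * k - 1)) := by
  obtain ⟨hne, hpos, hsum⟩ := D_facts ht hD
  have hs1 : 1 ≤ sS S := sS_pos hne hpos
  have hsm : sS S ≤ mS S := sS_le_mS hne
  obtain ⟨hSI, hcond | hcond⟩ := hEx
  · -- m + 1 = 2s : family 2 with k = s
    right
    obtain ⟨j, hj⟩ : ∃ j, sS S = j + 1 := ⟨sS S - 1, by omega⟩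
    have hIv : S = Finset.Icc (j + 1) (2 * j + 1) := by
      conv_lhs => rw [hSI]
      congr 1 <;> omega
    have hgauss := two_mul_sum_Icc (j + 1) (2 * j + 1) (by omega)
    rw [← hIv, hsum] at hgauss
    simp only [Nat.add_sub_cancel] at hgauss
    refine ⟨j + 1, by omega, ?_, ?_⟩
    · ring_nf at hgauss ⊢
      linarith
    · have e : 2 * (j + 1) - 1 = 2 * j + 1 := by omega
      rw [e]
      exact hIv
  · -- m + 2 = 2s : family 1 with k = s - 1
    left
    have hs2 : 2 ≤ sS S := by omega
    obtain ⟨j, hj⟩ : ∃ j, sS S = j + 2 := ⟨sS S - 2, by omega⟩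
    have hIv : S = Finset.Icc (j + 2) (2 * j + 2) := by
      conv_lhs => rw [hSI]
      congr 1 <;> omega
    have hgauss := two_mul_sum_Icc (j + 2) (2 * j + 2) (by omega)
    rw [← hIv, hsum] at hgauss
    have e2 : j + 2 - 1 = j + 1 := by omega
    rw [e2] at hgauss
    refine ⟨j + 1, by omega, ?_, ?_⟩
    · ring_nf at hgauss ⊢
      linarith
    · have e3 : j + 1 + 1 = j + 2 := by omega
      have e4 : 2 * (j + 1) = 2 * j + 2 := by omega
      rw [e3, e4]
      exact hIv

lemma Ex_mem1 {t k : ℕ} (hk : 1 ≤ k) (h : 2 * t = 3 * k * k + k) :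
    Finset.Icc (k + 1) (2 * k) ∈ D t ∧ Ex (Finset.Icc (k + 1) (2 * k)) := by
  have hkk : k ≤ k * k := Nat.le_mul_of_pos_left k hk
  have hkt : 2 * k ≤ t := by linarith [h, hkk]
  have hgauss := two_mul_sum_Icc (k + 1) (2 * k) (by omega)
  simp only [Nat.add_sub_cancel] at hgauss
  have hsum : ∑ x ∈ Finset.Icc (k + 1) (2 * k), x = t := by
    have h2 : 2 * (∑ x ∈ Finset.Icc (k + 1) (2 * k), x) = 2 * t := by
      ring_nf at hgauss h ⊢
      linarith
    omega
  have hne : (Finset.Icc (k + 1) (2 * k)).Nonempty := by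
    rw [Finset.nonempty_Icc]; omega
  have hmin : sS (Finset.Icc (k + 1) (2 * k)) = k + 1 := by
    apply sS_eq hne
    · rw [Finset.mem_Icc]; omega
    · intro x hx; rw [Finset.mem_Icc] at hx; omega
  have hmax : mS (Finset.Icc (k + 1) (2 * k)) = 2 * k := by
    apply mS_eq hne
    · rw [Finset.mem_Icc]; omega
    · intro x hx; rw [Finset.mem_Icc] at hx; omega
  constructor
  · rw [mem_D_iff]
    refine ⟨fun x hx => ?_, hsum⟩
    rw [Finset.mem_Icc] at hx
    omega
  · exact ⟨by rw [hmin, hmax], Or.inr (by rw [hmin, hmax]; omega)⟩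

lemma Ex_mem2 {t k : ℕ} (hk : 1 ≤ k) (h : 2 * t + k = 3 * k * k) :
    Finset.Icc k (2 * k - 1) ∈ D t ∧ Ex (Finset.Icc k (2 * k - 1)) := by
  obtain ⟨j, rfl⟩ : ∃ j, k = j + 1 := ⟨k - 1, by omega⟩
  have e1 : 2 * (j + 1) - 1 = 2 * j + 1 := by omega
  rw [e1]
  have hkt : 2 * j + 1 ≤ t := by
    have hkk : j * j ≥ 0 := Nat.zero_le _
    ring_nf at h ⊢
    nlinarith
  have hgauss := two_mul_sum_Icc (j + 1) (2 * j + 1) (by omega)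
  simp only [Nat.add_sub_cancel] at hgauss
  have hsum : ∑ x ∈ Finset.Icc (j + 1) (2 * j + 1), x = t := by
    have h2 : 2 * (∑ x ∈ Finset.Icc (j + 1) (2 * j + 1), x) = 2 * t := by
      ring_nf at hgauss h ⊢
      linarith
    omega
  have hne : (Finset.Icc (j + 1) (2 * j + 1)).Nonempty := by
    rw [Finset.nonempty_Icc]; omega
  have hmin : sS (Finset.Icc (j + 1) (2 * j + 1)) = j + 1 := by
    apply sS_eq hne
    · rw [Finset.mem_Icc]; omega
    · intro x hx; rw [Finset.mem_Icc] at hx; omega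
  have hmax : mS (Finset.Icc (j + 1) (2 * j + 1)) = 2 * j + 1 := by
    apply mS_eq hne
    · rw [Finset.mem_Icc]; omega
    · intro x hx; rw [Finset.mem_Icc] at hx; omega
  constructor
  · rw [mem_D_iff]
    refine ⟨fun x hx => ?_, hsum⟩
    rw [Finset.mem_Icc] at hx
    omega
  · exact ⟨by rw [hmin, hmax], Or.inl (by rw [hmin, hmax]; omega)⟩

end Pent

section PentCoeff

lemma cond1_iff (t b : ℕ) : (2 * (t : ℤ) = (b : ℤ) * (3 * (b : ℤ) + 1)) ↔ 2 * t = 3 * b * b + b := by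
  rw [show (b : ℤ) * (3 * (b : ℤ) + 1) = ((3 * b * b + b : ℕ) : ℤ) by push_cast; ring,
    show (2 * (t : ℤ)) = ((2 * t : ℕ) : ℤ) by push_cast; ring, Nat.cast_inj]

lemma cond2_iff (t b : ℕ) : (2 * (t : ℤ) = (b : ℤ) * (3 * (b : ℤ) - 1)) ↔ 2 * t + b = 3 * b * b := by
  constructor
  · intro h
    have h2 : ((2 * t + b : ℕ) : ℤ) = ((3 * b * b : ℕ) : ℤ) := by
      push_cast
      linear_combination h
    exact_mod_cast h2
  · intro h
    have h2 : ((2 * t + b : ℕ) : ℤ) = ((3 * b * b : ℕ) : ℤ) := by exact_mod_cast congrArg (Nat.cast : ℕ → ℤ) h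
    push_cast at h2
    linear_combination h2

lemma pentCoeff_term (t b : ℕ) :
    ((if 2 * (t : ℤ) = (b : ℤ) * (3 * (b : ℤ) + 1) then (-1 : ℤ) ^ b else 0) +
      (if 2 * (t : ℤ) = (b : ℤ) * (3 * (b : ℤ) - 1) ∧ 1 ≤ b then (-1 : ℤ) ^ b else 0)) =
    ((if 2 * t = 3 * b * b + b then (-1 : ℤ) ^ b else 0) +
      (if 2 * t + b = 3 * b * b ∧ 1 ≤ b then (-1 : ℤ) ^ b else 0)) := by
  congr 1
  · rw [if_congr (cond1_iff t b) rfl rfl]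
  · rw [if_congr (and_congr (cond2_iff t b) Iff.rfl) rfl rfl]

lemma pentCoeff_nat (t : ℕ) :
    pentCoeff (t : ℤ) = ∑ b ∈ Finset.range (t + 1),
      ((if 2 * t = 3 * b * b + b then (-1 : ℤ) ^ b else 0) +
        (if 2 * t + b = 3 * b * b ∧ 1 ≤ b then (-1 : ℤ) ^ b else 0)) := by
  rw [pentCoeff, Int.toNat_natCast]
  exact Finset.sum_congr rfl fun b _ => pentCoeff_term t b

lemma pent1 {t k : ℕ} (ht : 1 ≤ t) (hk : 1 ≤ k) (h : 2 * t = 3 * k * k + k) :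
    pentCoeff (t : ℤ) = (-1) ^ k := by
  rw [pentCoeff_nat]
  have hkk : k ≤ k * k := Nat.le_mul_of_pos_left k hk
  have hkt : k < t + 1 := by linarith [h, hkk]
  rw [Finset.sum_eq_single k]
  · rw [if_pos h, if_neg, add_zero]
    rintro ⟨h2, -⟩
    omega
  · intro b _ hbk
    rw [if_neg, if_neg, add_zero]
    · rintro ⟨h2, hb1⟩
      exact excl hb1 h h2
    · intro h2
      exact hbk (uniq1 (by omega))
  · intro hk2
    exact absurd (Finset.mem_range.2 hkt) hk2

lemma pent2 {t k : ℕ} (ht : 1 ≤ t) (hk : 1 ≤ k) (h : 2 * t + k = 3 * k * k) :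
    pentCoeff (t : ℤ) = (-1) ^ k := by
  rw [pentCoeff_nat]
  have hkk : k ≤ k * k := Nat.le_mul_of_pos_left k hk
  have hkt : k < t + 1 := by linarith [h, hkk]
  rw [Finset.sum_eq_single k]
  · rw [if_neg, if_pos ⟨h, hk⟩, zero_add]
    intro h2
    exact excl hk h2 h
  · intro b _ hbk
    rw [if_neg, if_neg, add_zero]
    · rintro ⟨h2, hb1⟩
      exact hbk (uniq2 h2 h)
    · intro h2
      exact excl hk h2 h
  · intro hk2
    exact absurd (Finset.mem_range.2 hkt) hk2

lemma pent0 {t : ℕ} (ht : 1 ≤ t) (h1 : ¬ ∃ k, 1 ≤ k ∧ 2 * t = 3 * k * k + k)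
    (h2 : ¬ ∃ k, 1 ≤ k ∧ 2 * t + k = 3 * k * k) : pentCoeff (t : ℤ) = 0 := by
  rw [pentCoeff_nat]
  apply Finset.sum_eq_zero
  intro b _
  rw [if_neg, if_neg, add_zero]
  · rintro ⟨hb2, hb1⟩
    exact h2 ⟨b, hb1, hb2⟩
  · intro hb
    have hb1 : 1 ≤ b := by
      by_contra hb0
      push_neg at hb0
      interval_cases b <;> omega
    exact h1 ⟨b, hb1, hb⟩

end PentCoeff

section Main

lemma gmap_spec {t : ℕ} {S : Finset ℕ} (ht : 1 ≤ t) (hS : S ∈ D t) (hE : ¬ Ex S) :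
    (gmap S ∈ D t ∧ ¬ Ex (gmap S)) ∧ gmap (gmap S) = S ∧
      (S.card + 1 = (gmap S).card ∨ (gmap S).card + 1 = S.card) := by
  obtain ⟨hne, hpos, hsum⟩ := D_facts ht hS
  have hsub : ∀ x ∈ S, x ≤ t := fun x hx => (mem_D_iff.1 hS).1 x hx |>.2
  by_cases hA : caseA S
  · have hg : gmap S = Amap S := if_pos hA
    have hAD : Amap S ∈ D t := by
      rw [mem_D_iff]
      constructor
      · intro x hx
        refine ⟨A_pos hne hpos hA x hx, ?_⟩
        have hxle := A_le hne hpos hA x hx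
        -- need mS S + 1 ≤ t
        have hsm : sS S < mS S := (A_prelim hne hpos hA).2.2.1
        have hs1 : 1 ≤ sS S := (A_prelim hne hpos hA).1
        have hpair : {sS S, mS S} ⊆ S := by
          intro y hy
          rcases Finset.mem_insert.1 hy with rfl | hy
          · exact sS_mem hne
          · rw [Finset.mem_singleton] at hy
            subst hy
            exact mS_mem hne
        have hsumge := Finset.sum_le_sum_of_subset (f := id) hpair
        rw [Finset.sum_pair (by omega : sS S ≠ mS S)] at hsumge
        simp only [id] at hsumge
        rw [hsum] at hsumge
        omega
      · rw [A_sum hne hpos hA, hsum]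
    rw [hg]
    refine ⟨⟨hAD, A_notEx hne hpos hA⟩, ?_, Or.inr (A_card hne hpos hA)⟩
    have hAne : (Amap S).Nonempty := A_ne hne hpos hA
    have hApos := A_pos hne hpos hA
    rw [gmap, if_neg (A_not_caseA hne hpos hA)]
    exact A_Bmap hne hpos hA
  · obtain ⟨hB1, hB2⟩ := not_caseA_cases hne hpos hA hE
    have hg : gmap S = Bmap S := if_neg hA
    have hBD : Bmap S ∈ D t := by
      rw [mem_D_iff]
      constructor
      · intro x hx
        refine ⟨B_pos hne hpos hB1 hB2 x hx, ?_⟩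
        have := B_le hne hpos hB1 hB2 x hx
        have := hsub _ (mS_mem hne)
        omega
      · rw [B_sum hne hpos hB1 hB2, hsum]
    rw [hg]
    refine ⟨⟨hBD, B_notEx hne hpos hB1 hB2⟩, ?_, Or.inl (B_card hne hpos hB1 hB2).symm⟩
    rw [gmap, if_pos (B_caseA hne hpos hB1 hB2)]
    exact B_Amap hne hpos hB1 hB2

lemma sum_notEx {t : ℕ} (ht : 1 ≤ t) :
    ∑ S ∈ (D t).filter (fun S => ¬ Ex S), (-1 : ℤ) ^ S.card = 0 := by
  apply Finset.sum_involution (g := fun S _ => gmap S)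
  · intro S hS
    rw [Finset.mem_filter] at hS
    obtain ⟨-, -, hcard⟩ := gmap_spec ht hS.1 hS.2
    rcases hcard with h | h
    · rw [← h, pow_succ]
      ring
    · rw [← h, pow_succ]
      ring
  · intro S hS _
    rw [Finset.mem_filter] at hS
    obtain ⟨-, -, hcard⟩ := gmap_spec ht hS.1 hS.2
    intro heq
    rw [heq] at hcard
    omega
  · intro S hS
    rw [Finset.mem_filter] at hS ⊢
    obtain ⟨⟨h1, h2⟩, -, -⟩ := gmap_spec ht hS.1 hS.2
    exact ⟨h1, h2⟩
  · intro S hS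
    rw [Finset.mem_filter] at hS
    exact (gmap_spec ht hS.1 hS.2).2.1

theorem franklin (t : ℕ) : (∑ S ∈ D t, (-1 : ℤ) ^ S.card) = pentCoeff (t : ℤ) := by
  rcases Nat.eq_zero_or_pos t with rfl | ht
  · decide
  · rw [← Finset.sum_filter_add_sum_filter_not (D t) Ex, sum_notEx ht, add_zero]
    by_cases h1 : ∃ k, 1 ≤ k ∧ 2 * t = 3 * k * k + k
    · obtain ⟨k, hk, hkey⟩ := h1
      obtain ⟨hmem, hex⟩ := Ex_mem1 hk hkey
      have hsingle : (D t).filter Ex = {Finset.Icc (k + 1) (2 * k)} := by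
        apply Finset.eq_singleton_iff_unique_mem.2
        refine ⟨Finset.mem_filter.2 ⟨hmem, hex⟩, ?_⟩
        intro S hS
        rw [Finset.mem_filter] at hS
        rcases Ex_char ht hS.1 hS.2 with ⟨k', hk', hkey', rfl⟩ | ⟨k', hk', hkey', rfl⟩
        · have : k' = k := uniq1 (by omega)
          rw [this]
        · exact absurd (excl hk' hkey hkey') id
      rw [hsingle, Finset.sum_singleton, Nat.card_Icc,
        show 2 * k + 1 - (k + 1) = k by omega, pent1 ht hk hkey]
    · by_cases h2 : ∃ k, 1 ≤ k ∧ 2 * t + k = 3 * k * k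
      · obtain ⟨k, hk, hkey⟩ := h2
        obtain ⟨hmem, hex⟩ := Ex_mem2 hk hkey
        have hsingle : (D t).filter Ex = {Finset.Icc k (2 * k - 1)} := by
          apply Finset.eq_singleton_iff_unique_mem.2
          refine ⟨Finset.mem_filter.2 ⟨hmem, hex⟩, ?_⟩
          intro S hS
          rw [Finset.mem_filter] at hS
          rcases Ex_char ht hS.1 hS.2 with ⟨k', hk', hkey', rfl⟩ | ⟨k', hk', hkey', rfl⟩
          · exact absurd (excl hk hkey' hkey) id
          · have : k' = k := uniq2 hkey' hkey
            rw [this]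
        rw [hsingle, Finset.sum_singleton, Nat.card_Icc,
          show 2 * k - 1 + 1 - k = k by omega, pent2 ht hk hkey]
      · have hempty : (D t).filter Ex = ∅ := by
          rw [Finset.filter_eq_empty_iff]
          intro S hS hE
          rcases Ex_char ht hS hE with ⟨k', hk', hkey', -⟩ | ⟨k', hk', hkey', -⟩
          · exact h1 ⟨k', hk', hkey'⟩
          · exact h2 ⟨k', hk', hkey'⟩
        rw [hempty, Finset.sum_empty, pent0 ht h1 h2]

end Main

end Frank

namespace Frank

lemma coeff_prod_one_sub (A : Finset ℕ) (t : ℕ) :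
    (PowerSeries.coeff (R := ℂ) t) (∏ j ∈ A, (1 - (PowerSeries.X : PowerSeries ℂ) ^ j)) =
      ∑ S ∈ A.powerset.filter (fun S => ∑ x ∈ S, x = t), (-1 : ℂ) ^ S.card := by
  classical
  induction A using Finset.induction_on generalizing t with
  | empty =>
    by_cases h : t = 0 <;>
      simp [h, Finset.filter_singleton, eq_comm, PowerSeries.coeff_one]
  | @insert a A' ha ih =>
    rw [Finset.prod_insert ha, sub_mul, one_mul, map_sub, ih t,
      PowerSeries.coeff_X_pow_mul']
    have hinj : ∀ x ∈ A'.powerset.filter (fun S => ∑ y ∈ insert a S, y = t),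
        ∀ y ∈ A'.powerset.filter (fun S => ∑ z ∈ insert a S, z = t),
        insert a x = insert a y → x = y := by
      intro x hx y hy hxy
      rw [Finset.mem_filter, Finset.mem_powerset] at hx hy
      have hax : a ∉ x := fun hc => ha (hx.1 hc)
      have hay : a ∉ y := fun hc => ha (hy.1 hc)
      rw [← Finset.erase_insert hax, hxy, Finset.erase_insert hay]
    have himage : ∑ S ∈ ((A'.powerset.image (insert a)).filter
          (fun S => ∑ x ∈ S, x = t)), (-1 : ℂ) ^ S.card =
        -(if a ≤ t then
            ∑ S ∈ A'.powerset.filter (fun S => ∑ x ∈ S, x = t - a), (-1 : ℂ) ^ S.card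
          else 0) := by
      rw [Finset.filter_image, Finset.sum_image hinj]
      have hstep : ∀ S ∈ A'.powerset.filter (fun S => ∑ x ∈ insert a S, x = t),
          (-1 : ℂ) ^ (insert a S).card = -((-1 : ℂ) ^ S.card) := by
        intro S hS
        rw [Finset.mem_filter, Finset.mem_powerset] at hS
        have haS : a ∉ S := fun hc => ha (hS.1 hc)
        rw [Finset.card_insert_of_notMem haS, pow_succ]
        ring
      rw [Finset.sum_congr rfl hstep, Finset.sum_neg_distrib]
      congr 1
      by_cases hat : a ≤ t
      · rw [if_pos hat]
        apply Finset.sum_congr _ (fun _ _ => rfl)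
        apply Finset.filter_congr
        intro S hS
        rw [Finset.mem_powerset] at hS
        have haS : a ∉ S := fun hc => ha (hS hc)
        rw [Finset.sum_insert haS]
        constructor <;> intro h <;> omega
      · rw [if_neg hat]
        have : A'.powerset.filter (fun S => ∑ x ∈ insert a S, x = t) = ∅ := by
          rw [Finset.filter_eq_empty_iff]
          intro S hS h
          rw [Finset.mem_powerset] at hS
          have haS : a ∉ S := fun hc => ha (hS hc)
          rw [Finset.sum_insert haS] at h
          omega
        rw [this, Finset.sum_empty]
    rw [Finset.powerset_insert, Finset.filter_union, Finset.sum_union, himage]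
    · by_cases hat : a ≤ t
      · rw [if_pos hat, if_pos hat, ih (t - a)]
        ring
      · rw [if_neg hat, if_neg hat]
        ring
    · rw [Finset.disjoint_left]
      intro S hS1 hS2
      rw [Finset.mem_filter, Finset.mem_powerset] at hS1
      rw [Finset.mem_filter, Finset.mem_image] at hS2
      obtain ⟨T, _, rfl⟩ := hS2.1
      exact ha (hS1.1 (Finset.mem_insert_self a T))

lemma coeff_pochInf (d : ℕ) :
    PowerSeries.coeff (R := ℂ) d pochInf = ((pentCoeff (d : ℤ) : ℤ) : ℂ) := by
  rw [pochInf, PowerSeries.coeff_mk, coeff_prod_one_sub, ← Frank.franklin d]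
  push_cast
  rfl

lemma coeff_Lf (f : ℕ → ℂ) (e : ℕ) :
    PowerSeries.coeff (R := ℂ) e (Lf f) = ∑ i ∈ (Finset.Icc 1 e).filter (· ∣ e), f i := by
  rw [Lf, PowerSeries.coeff_mk, map_sum, Finset.sum_filter]
  apply Finset.sum_congr rfl
  intro i hi
  rw [Finset.mem_Icc] at hi
  rw [LinearMap.map_smul, lambertTerm, PowerSeries.coeff_mk, smul_eq_mul]
  by_cases hd : i ∣ e
  · rw [if_pos hd, if_pos ⟨hd, by omega⟩, mul_one]
  · rw [if_neg hd, if_neg (fun h => hd h.1), mul_zero]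

end Frank

theorem statement5 (f : ℕ → ℂ) (n : ℕ) (hn : 1 ≤ n) :
    PowerSeries.coeff (R := ℂ) n (pochInf * Lf f) =
      ∑ i ∈ Finset.Icc 1 n, (aEnt n i : ℂ) * f i := by
  classical
  have hR : ∀ i ∈ Finset.Icc 1 n, (aEnt n i : ℂ) * f i =
      ∑ s ∈ Finset.range (n / i),
        ((pentCoeff ((n - (s + 1) * i : ℕ) : ℤ) : ℤ) : ℂ) * f i := by
    intro i hi
    rw [Finset.mem_Icc] at hi
    rw [aEnt, Int.cast_sum, Finset.sum_mul]
    apply Finset.sum_congr rfl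
    intro s hs
    rw [Finset.mem_range] at hs
    have hle : (s + 1) * i ≤ n := by
      have h1 : s + 1 ≤ n / i := hs
      have h2 : (s + 1) * i ≤ (n / i) * i := Nat.mul_le_mul_right i h1
      have h3 : (n / i) * i ≤ n := Nat.div_mul_le_self n i
      omega
    congr 2
    push_cast [Nat.cast_sub hle]
    ring
  rw [Finset.sum_congr rfl hR, PowerSeries.coeff_mul,
    Finset.Nat.sum_antidiagonal_eq_sum_range_succ_mk]
  have hL : ∀ k ∈ Finset.range (n + 1),
      PowerSeries.coeff (R := ℂ) k pochInf * PowerSeries.coeff (R := ℂ) (n - k) (Lf f) =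
      ∑ i ∈ (Finset.Icc 1 (n - k)).filter (· ∣ (n - k)),
        ((pentCoeff (k : ℤ) : ℤ) : ℂ) * f i := by
    intro k _
    rw [Frank.coeff_pochInf, Frank.coeff_Lf, Finset.mul_sum]
  rw [Finset.sum_congr rfl hL]
  have e1 := Finset.sum_sigma' (Finset.range (n + 1))
    (fun k => (Finset.Icc 1 (n - k)).filter (· ∣ (n - k)))
    (fun k i => ((pentCoeff (k : ℤ) : ℤ) : ℂ) * f i)
  have e2 := Finset.sum_sigma' (Finset.Icc 1 n)
    (fun i => Finset.range (n / i))
    (fun i s => ((pentCoeff ((n - (s + 1) * i : ℕ) : ℤ) : ℤ) : ℂ) * f i)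
  rw [e1, e2]
  apply Finset.sum_nbij' (i := fun p => (⟨p.2, (n - p.1) / p.2 - 1⟩ : Σ _ : ℕ, ℕ))
    (j := fun q => (⟨n - (q.2 + 1) * q.1, q.1⟩ : Σ _ : ℕ, ℕ))
  · intro p hp
    rw [Finset.mem_sigma, Finset.mem_range] at hp
    obtain ⟨hk, hi⟩ := hp
    rw [Finset.mem_filter, Finset.mem_Icc] at hi
    obtain ⟨⟨hi1, hi2⟩, hdvd⟩ := hi
    rw [Finset.mem_sigma]
    dsimp only
    rw [Finset.mem_Icc, Finset.mem_range]
    have hq1 : 1 ≤ (n - p.1) / p.2 := by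
      rw [Nat.le_div_iff_mul_le (by omega : 0 < p.2)]
      omega
    have hq2 : (n - p.1) / p.2 ≤ n / p.2 := Nat.div_le_div_right (by omega)
    exact ⟨by omega, by omega⟩
  · intro q hq
    rw [Finset.mem_sigma, Finset.mem_Icc, Finset.mem_range] at hq
    obtain ⟨⟨hi1, hi2⟩, hs⟩ := hq
    have hle : (q.2 + 1) * q.1 ≤ n := by
      have h2 : (q.2 + 1) * q.1 ≤ (n / q.1) * q.1 := Nat.mul_le_mul_right q.1 hs
      have h3 : (n / q.1) * q.1 ≤ n := Nat.div_mul_le_self n q.1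
      omega
    rw [Finset.mem_sigma]
    dsimp only
    rw [Finset.mem_range, Finset.mem_filter, Finset.mem_Icc]
    have he : n - (n - (q.2 + 1) * q.1) = (q.2 + 1) * q.1 := by omega
    rw [he]
    exact ⟨by omega, ⟨⟨hi1, Nat.le_mul_of_pos_left q.1 (by omega)⟩,
      dvd_mul_left q.1 (q.2 + 1)⟩⟩
  · intro p hp
    rw [Finset.mem_sigma, Finset.mem_range] at hp
    obtain ⟨hk, hi⟩ := hp
    rw [Finset.mem_filter, Finset.mem_Icc] at hi
    obtain ⟨⟨hi1, hi2⟩, hdvd⟩ := hi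
    have hq1 : 1 ≤ (n - p.1) / p.2 := by
      rw [Nat.le_div_iff_mul_le (by omega : 0 < p.2)]
      omega
    dsimp only
    have hstep : (n - p.1) / p.2 - 1 + 1 = (n - p.1) / p.2 := by omega
    rw [hstep, Nat.div_mul_cancel hdvd,
      show n - (n - p.1) = p.1 by omega]
  · intro q hq
    rw [Finset.mem_sigma, Finset.mem_Icc, Finset.mem_range] at hq
    obtain ⟨⟨hi1, hi2⟩, hs⟩ := hq
    have hle : (q.2 + 1) * q.1 ≤ n := by
      have h2 : (q.2 + 1) * q.1 ≤ (n / q.1) * q.1 := Nat.mul_le_mul_right q.1 hs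
      have h3 : (n / q.1) * q.1 ≤ n := Nat.div_mul_le_self n q.1
      omega
    dsimp only
    rw [show n - (n - (q.2 + 1) * q.1) = (q.2 + 1) * q.1 by omega,
      Nat.mul_div_cancel _ (by omega : 0 < q.1),
      show q.2 + 1 - 1 = q.2 by omega]
  · intro p hp
    rw [Finset.mem_sigma, Finset.mem_range] at hp
    obtain ⟨hk, hi⟩ := hp
    rw [Finset.mem_filter, Finset.mem_Icc] at hi
    obtain ⟨⟨hi1, hi2⟩, hdvd⟩ := hi
    have hq1 : 1 ≤ (n - p.1) / p.2 := by
      rw [Nat.le_div_iff_mul_le (by omega : 0 < p.2)]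
      omega
    dsimp only
    have hstep : (n - p.1) / p.2 - 1 + 1 = (n - p.1) / p.2 := by omega
    rw [hstep, Nat.div_mul_cancel hdvd, show n - (n - p.1) = p.1 by omega]
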